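/- Let a, b, p ∈ ℝ satisfy a > 0, 0 < p < 2a, and 0 < b < (1/4)·min(2a−p, 4p). Then: (a) for all 0 < s < 1, s·|F₋'(s)|·G_{F₋}(s) − H_{F₋}(s) ≥ b·p·(a − b − p/2)·s^{p−1} > b²·p·s^{p−1} > 0; and (b) for all s > 1, s·|F₊'(s)|·G_{F₊}(s) − H_{F₊}(s) ≥ b·p·(a + p/2)·s^{−p−1} > b²·p·s^{−p−1} > 0. -/

import Mathlib

open Real

noncomputable section

/-- `G_F(s) := −(s F'(s))'`. -/
def GF (F : ℝ → ℝ) (s : ℝ) : ℝ := - deriv (fun t => t * deriv F t) s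

/-- `H_F(s) := (1/2)(s G_F(s))'`. -/
def HF (F : ℝ → ℝ) (s : ℝ) : ℝ := (1 / 2) * deriv (fun t => t * GF F t) s

/-- The reparametrization `F₊(s) = −(a+b) log s − (b/p) s^{−p}`. -/
def Fplus (a b p s : ℝ) : ℝ := -(a + b) * Real.log s - (b / p) * s ^ (-p)

/-- The reparametrization `F₋(s) = −(a−b) log s − (b/p) s^{p}`. -/
def Fminus (a b p s : ℝ) : ℝ := -(a - b) * Real.log s - (b / p) * s ^ p

def Faux (c d q : ℝ) (s : ℝ) : ℝ := -c * Real.log s - (d / q) * s ^ q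

lemma deriv_Faux (c d q : ℝ) (hq : q ≠ 0) {s : ℝ} (hs : 0 < s) :
    deriv (Faux c d q) s = -c / s - d * s ^ (q - 1) := by
  have h1 : HasDerivAt (fun t : ℝ => -c * Real.log t - (d / q) * t ^ q)
      (-c * s⁻¹ - (d / q) * (q * s ^ (q - 1))) s :=
    ((Real.hasDerivAt_log hs.ne').const_mul (-c)).sub
      ((Real.hasDerivAt_rpow_const (Or.inl hs.ne')).const_mul (d / q))
  have h2 : deriv (Faux c d q) s = -c * s⁻¹ - (d / q) * (q * s ^ (q - 1)) := h1.deriv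
  rw [h2]; field_simp

lemma GF_Faux (c d q : ℝ) (hq : q ≠ 0) {s : ℝ} (hs : 0 < s) :
    GF (Faux c d q) s = d * q * s ^ (q - 1) := by
  have heq : (fun t => t * deriv (Faux c d q) t) =ᶠ[nhds s] (fun t => -c - d * t ^ q) := by
    filter_upwards [eventually_gt_nhds hs] with t ht
    rw [deriv_Faux c d q hq ht]
    have h1 : t ^ (q - 1) * t = t ^ q := by
      rw [← Real.rpow_add_one ht.ne']; congr 1; ring
    rw [← h1]; field_simp
  have h2 : HasDerivAt (fun t : ℝ => -c - d * t ^ q) (-(d * (q * s ^ (q - 1)))) s := by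
    simpa using ((Real.hasDerivAt_rpow_const (Or.inl hs.ne')).const_mul d).const_sub (-c)
  unfold GF
  rw [heq.deriv_eq, h2.deriv]
  ring

lemma HF_Faux (c d q : ℝ) (hq : q ≠ 0) {s : ℝ} (hs : 0 < s) :
    HF (Faux c d q) s = (1 / 2) * (d * q * q * s ^ (q - 1)) := by
  have heq : (fun t => t * GF (Faux c d q) t) =ᶠ[nhds s] (fun t => d * q * t ^ q) := by
    filter_upwards [eventually_gt_nhds hs] with t ht
    rw [GF_Faux c d q hq ht]
    have h1 : t ^ (q - 1) * t = t ^ q := by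
      rw [← Real.rpow_add_one ht.ne']; congr 1; ring
    linear_combination d * q * h1
  have h2 : HasDerivAt (fun t : ℝ => d * q * t ^ q) (d * q * (q * s ^ (q - 1))) s :=
    (Real.hasDerivAt_rpow_const (Or.inl hs.ne')).const_mul (d * q)
  unfold HF
  rw [heq.deriv_eq, h2.deriv]
  ring

lemma Fminus_eq (a b p : ℝ) : Fminus a b p = Faux (a - b) b p := rfl

lemma Fplus_eq (a b p : ℝ) : Fplus a b p = Faux (a + b) (-b) (-p) := by
  funext s; unfold Fplus Faux; rw [neg_div_neg_eq]

/-- **Lemma 2.14** (positivity of the Carleman bulk coefficients): under `a > 0`,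
`0 < p < 2a`, `0 < b < (1/4)min(2a−p, 4p)`, one has
`s|F₋'|G_{F₋} − H_{F₋} ≥ bp(a−b−p/2)s^{p−1} > b²p s^{p−1} > 0` on `(0,1)` and
`s|F₊'|G_{F₊} − H_{F₊} ≥ bp(a+p/2)s^{−p−1} > b²p s^{−p−1} > 0` on `(1,∞)`. -/
theorem F_pm_bulk_positivity (a b p : ℝ) (ha : 0 < a) (hp : 0 < p) (hpa : p < 2 * a)
    (hb : 0 < b) (hb' : b < (1 / 4) * min (2 * a - p) (4 * p)) :
    (∀ s : ℝ, 0 < s → s < 1 →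
      s * |deriv (Fminus a b p) s| * GF (Fminus a b p) s - HF (Fminus a b p) s ≥
        b * p * (a - b - p / 2) * s ^ (p - 1) ∧
      b * p * (a - b - p / 2) * s ^ (p - 1) > b ^ 2 * p * s ^ (p - 1) ∧
      (0 : ℝ) < b ^ 2 * p * s ^ (p - 1)) ∧
    (∀ s : ℝ, 1 < s →
      s * |deriv (Fplus a b p) s| * GF (Fplus a b p) s - HF (Fplus a b p) s ≥
        b * p * (a + p / 2) * s ^ (-p - 1) ∧
      b * p * (a + p / 2) * s ^ (-p - 1) > b ^ 2 * p * s ^ (-p - 1) ∧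
      (0 : ℝ) < b ^ 2 * p * s ^ (-p - 1)) := by
  have hbap : 4 * b < 2 * a - p := by
    have := min_le_left (2 * a - p) (4 * p); linarith
  have hbp : b < p := by
    have := min_le_right (2 * a - p) (4 * p); linarith
  constructor
  · intro s hs hs1
    have hu : (0 : ℝ) < s ^ (p - 1) := Real.rpow_pos_of_pos hs _
    have hv : (0 : ℝ) < s ^ p := Real.rpow_pos_of_pos hs _
    have hsu : s ^ (p - 1) * s = s ^ p := by
      rw [← Real.rpow_add_one hs.ne']; congr 1; ring
    have hd : deriv (Fminus a b p) s = -(a - b) / s - b * s ^ (p - 1) := by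
      rw [Fminus_eq, deriv_Faux _ _ _ hp.ne' hs]
    have hG : GF (Fminus a b p) s = b * p * s ^ (p - 1) := by
      rw [Fminus_eq, GF_Faux _ _ _ hp.ne' hs]
    have hH : HF (Fminus a b p) s = (1 / 2) * (b * p * p * s ^ (p - 1)) := by
      rw [Fminus_eq, HF_Faux _ _ _ hp.ne' hs]
    have hdneg : deriv (Fminus a b p) s < 0 := by
      rw [hd]
      have h1 : (0 : ℝ) < (a - b) / s := div_pos (by linarith) hs
      have h2 : (0 : ℝ) < b * s ^ (p - 1) := mul_pos hb hu
      have h3 : -(a - b) / s = -((a - b) / s) := by ring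
      rw [h3]; linarith
    have key : s * |deriv (Fminus a b p) s| = (a - b) + b * s ^ p := by
      rw [abs_of_neg hdneg, hd]
      field_simp
      linear_combination b * hsu
    refine ⟨?_, ?_, ?_⟩
    · rw [key, hG, hH]
      nlinarith [mul_nonneg (mul_nonneg (mul_nonneg hb.le hv.le) (mul_pos hb hp).le) hu.le]
    · nlinarith [mul_pos (mul_pos hb hp) hu]
    · positivity
  · intro s hs1
    have hs : (0 : ℝ) < s := lt_trans one_pos hs1
    have hu : (0 : ℝ) < s ^ (-p - 1) := Real.rpow_pos_of_pos hs _
    have hw : (0 : ℝ) < s ^ (-p) := Real.rpow_pos_of_pos hs _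
    have hw1 : s ^ (-p) < 1 := Real.rpow_lt_one_of_one_lt_of_neg hs1 (by linarith)
    have hsu : s ^ (-p - 1) * s = s ^ (-p) := by
      rw [← Real.rpow_add_one hs.ne']; congr 1; ring
    have hq : (-p - 1) = (-p) - 1 := by ring
    have hd : deriv (Fplus a b p) s = -(a + b) / s + b * s ^ (-p - 1) := by
      rw [Fplus_eq, deriv_Faux _ _ _ (by linarith : -p ≠ 0) hs, ← hq]; ring
    have hG : GF (Fplus a b p) s = b * p * s ^ (-p - 1) := by
      rw [Fplus_eq, GF_Faux _ _ _ (by linarith : -p ≠ 0) hs, ← hq]; ring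
    have hH : HF (Fplus a b p) s = -(1 / 2) * (b * p * p * s ^ (-p - 1)) := by
      rw [Fplus_eq, HF_Faux _ _ _ (by linarith : -p ≠ 0) hs, ← hq]; ring
    have hdneg : deriv (Fplus a b p) s < 0 := by
      rw [hd]
      have h1 : b * s ^ (-p - 1) * s < (a + b) := by nlinarith
      have h2 : (-(a + b) / s + b * s ^ (-p - 1)) * s < 0 := by
        field_simp
        nlinarith
      nlinarith
    have key : s * |deriv (Fplus a b p) s| = (a + b) - b * s ^ (-p) := by
      rw [abs_of_neg hdneg, hd]
      field_simp
      linear_combination (-b) * hsu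
    refine ⟨?_, ?_, ?_⟩
    · rw [key, hG, hH]
      nlinarith [mul_nonneg (mul_nonneg hb.le (by linarith : (0:ℝ) ≤ 1 - s ^ (-p))) (mul_pos hp hu).le]
    · nlinarith [mul_pos (mul_pos hb hp) hu]
    · positivity
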